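/- Let P be an additive submonoid of the nonnegative cone of an ordered field K. Then P has a minimal generating set A if and only if P is atomic with A equal to the set of atoms of P; in that case A is the unique minimal generating set. -/

import Mathlib

/-- `a` is an atom of the additive submonoid `P`. -/
def IsAtomOf {K : Type*} [AddCommMonoid K] (P : AddSubmonoid K) (a : K) : Prop :=
  a ∈ P ∧ a ≠ 0 ∧ ∀ x ∈ P, ∀ y ∈ P, a = x + y → x = 0 ∨ y = 0

/-- `P` is atomic: every element is a finite sum of atoms. -/
def IsAtomicMonoid {K : Type*} [AddCommMonoid K] (P : AddSubmonoid K) : Prop :=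
  ∀ x ∈ P, ∃ s : Multiset K, (∀ a ∈ s, IsAtomOf P a) ∧ s.sum = x

/-- The set of factorizations of `x` into atoms of `P`. -/
def Factorizations {K : Type*} [AddCommMonoid K] (P : AddSubmonoid K) (x : K) :
    Set (Multiset K) :=
  {s | (∀ a ∈ s, IsAtomOf P a) ∧ s.sum = x}

/-- `P` is an FF-monoid. -/
def IsFFMonoid {K : Type*} [AddCommMonoid K] (P : AddSubmonoid K) : Prop :=
  IsAtomicMonoid P ∧ ∀ x ∈ P, (Factorizations P x).Finite

/-- `P` is a BF-monoid. -/
def IsBFMonoid {K : Type*} [AddCommMonoid K] (P : AddSubmonoid K) : Prop :=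
  IsAtomicMonoid P ∧ ∀ x ∈ P, {n : ℕ | ∃ s ∈ Factorizations P x, Multiset.card s = n}.Finite

/--  is a minimal generating set of the additive submonoid . -/
def IsMinimalGenSet {K : Type*} [AddCommMonoid K] (P : AddSubmonoid K) (A : Set K) : Prop :=
  AddSubmonoid.closure A = P ∧ ∀ B ⊂ A, AddSubmonoid.closure B ≠ P

/-- An atom belongs to every generating set. -/
lemma atom_mem_genSet {K : Type*} [AddCommMonoid K] {P : AddSubmonoid K} {A : Set K}
    (hA : AddSubmonoid.closure A = P) {a : K} (ha : IsAtomOf P a) : a ∈ A := by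
  obtain ⟨haP, ha0, hatom⟩ := ha
  have : a ∈ AddSubmonoid.closure A := hA ▸ haP
  obtain ⟨s, hs, hsum⟩ := AddSubmonoid.exists_multiset_of_mem_closure this
  have hAP : A ⊆ (P : Set K) := hA ▸ AddSubmonoid.subset_closure
  clear this hA
  induction s using Multiset.induction with
  | empty => simp at hsum; exact absurd hsum.symm ha0
  | cons x t ih =>
    rw [Multiset.sum_cons] at hsum
    have hxP : x ∈ P := hAP (hs x (Multiset.mem_cons_self x t))
    have htA : ∀ y ∈ t, y ∈ A := fun y hy => hs y (Multiset.mem_cons_of_mem hy)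
    have htP : t.sum ∈ P := AddSubmonoid.multiset_sum_mem P t (fun y hy => hAP (htA y hy))
    rcases hatom x hxP t.sum htP hsum.symm with h0 | h0
    · exact ih htA (by rw [h0, zero_add] at hsum; exact hsum)
    · rw [h0, add_zero] at hsum
      rw [← hsum]; exact hs x (Multiset.mem_cons_self x t)

theorem minimal_gen_set_iff_atomic {K : Type*} [Field K] [LinearOrder K] [IsStrictOrderedRing K]
    (P : AddSubmonoid K) (hP : ∀ x ∈ P, 0 ≤ x) (A : Set K) :
    (IsMinimalGenSet P A ↔ (IsAtomicMonoid P ∧ A = {a | IsAtomOf P a})) ∧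
      (IsMinimalGenSet P A → ∀ B : Set K, IsMinimalGenSet P B → B = A) := by
  -- key forward fact, proved once for an arbitrary set
  have key : ∀ C : Set K, IsMinimalGenSet P C → C = {a | IsAtomOf P a} := by
    intro C ⟨hgen, hmin⟩
    have hCP : C ⊆ (P : Set K) := hgen ▸ AddSubmonoid.subset_closure
    -- 0 ∉ C
    have h0 : (0 : K) ∉ C := by
      intro h0
      refine hmin (C \ {0}) ⟨Set.diff_subset, fun hsub => (hsub h0).2 rfl⟩ ?_
      rw [← hgen]
      refine le_antisymm (AddSubmonoid.closure_mono Set.diff_subset) ?_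
      rw [AddSubmonoid.closure_le]
      intro b hb
      by_cases hb0 : b = 0
      · rw [hb0]; exact zero_mem _
      · exact AddSubmonoid.subset_closure ⟨hb, hb0⟩
    ext a
    simp only [Set.mem_setOf_eq]
    constructor
    · -- every element of C is an atom
      intro haC
      have haP : a ∈ P := hCP haC
      have ha0 : a ≠ 0 := fun h => h0 (h ▸ haC)
      refine ⟨haP, ha0, ?_⟩
      by_contra h
      push_neg at h
      obtain ⟨x, hxP, y, hyP, hxy, hx0, hy0⟩ := h
      have hxpos : 0 < x := lt_of_le_of_ne (hP x hxP) (Ne.symm hx0)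
      have hypos : 0 < y := lt_of_le_of_ne (hP y hyP) (Ne.symm hy0)
      have hxa : x < a := by rw [hxy]; linarith
      have hya : y < a := by rw [hxy]; linarith
      -- any element of P less than a lies in closure (C \ {a})
      have sub : ∀ z ∈ P, z < a → z ∈ AddSubmonoid.closure (C \ {a}) := by
        intro z hzP hza
        have : z ∈ AddSubmonoid.closure C := hgen ▸ hzP
        obtain ⟨s, hs, hsum⟩ := AddSubmonoid.exists_multiset_of_mem_closure this
        have hna : a ∉ s := by
          intro hmem
          have : s.sum = a + (s.erase a).sum := by
            conv_lhs => rw [← Multiset.cons_erase hmem]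
            rw [Multiset.sum_cons]
          have hnn : 0 ≤ (s.erase a).sum :=
            Multiset.sum_nonneg fun b hb =>
              hP b (hCP (hs b (Multiset.mem_of_mem_erase hb)))
          rw [hsum] at this
          linarith
        rw [← hsum]
        exact AddSubmonoid.multiset_sum_mem _ s (fun b hb =>
          AddSubmonoid.subset_closure ⟨hs b hb, fun hba => hna (hba ▸ hb)⟩)
      have haCl : a ∈ AddSubmonoid.closure (C \ {a}) := by
        have := add_mem (sub x hxP hxa) (sub y hyP hya)
        rwa [← hxy] at this
      refine hmin (C \ {a}) ⟨Set.diff_subset, fun hsub => (hsub haC).2 rfl⟩ ?_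
      rw [← hgen]
      refine le_antisymm (AddSubmonoid.closure_mono Set.diff_subset) ?_
      rw [AddSubmonoid.closure_le]
      intro b hb
      by_cases hba : b = a
      · rw [hba]; exact haCl
      · exact AddSubmonoid.subset_closure ⟨hb, hba⟩
    · intro ha
      exact atom_mem_genSet hgen ha
  have fwd : ∀ C : Set K, IsMinimalGenSet P C →
      IsAtomicMonoid P ∧ C = {a | IsAtomOf P a} := by
    intro C hC
    have hCeq := key C hC
    refine ⟨?_, hCeq⟩
    intro x hx
    have : x ∈ AddSubmonoid.closure C := hC.1 ▸ hx
    obtain ⟨s, hs, hsum⟩ := AddSubmonoid.exists_multiset_of_mem_closure this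
    exact ⟨s, fun b hb => (hCeq ▸ hs b hb : b ∈ {a | IsAtomOf P a}), hsum⟩
  constructor
  · constructor
    · exact fwd A
    · rintro ⟨hatomic, rfl⟩
      have hgen : AddSubmonoid.closure {a | IsAtomOf P a} = P := by
        refine le_antisymm ?_ ?_
        · rw [AddSubmonoid.closure_le]; exact fun b hb => hb.1
        · intro x hx
          obtain ⟨s, hs, hsum⟩ := hatomic x hx
          rw [← hsum]
          exact AddSubmonoid.multiset_sum_mem _ s
            (fun b hb => AddSubmonoid.subset_closure (hs b hb))
      refine ⟨hgen, ?_⟩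
      intro B hB hBgen
      obtain ⟨hsub, hne⟩ := hB
      obtain ⟨a, haA, haB⟩ := Set.exists_of_ssubset ⟨hsub, hne⟩
      exact haB (atom_mem_genSet hBgen haA)
  · intro hA B hB
    rw [key B hB, key A hA]
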